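/- arXiv:1703.07809 — 3 statements merged into one kernel-verified Lean document; each statement's English description precedes it below -/
import Mathlib

section
/- Let S: (0,∞) → (0,∞) be a C² function with S' < 0 on (0,∞), and suppose there exist α₁ > 0 and a constant C̃ ∈ (0,2) such that t ↦ −t·S'(t) is integrable on (0, α₁] and S''(α)/(−S'(α)) ≤ C̃/α for all α ∈ (0, α₁]. Then there exists a constant C_S > 0 such that (1/α)·∫₀^α S(t) dt ≤ C_S·S(α) for all α ∈ (0, α₁]. -/
open Filter

/-- Sufficient condition for the averaged-integral bound on the surrogate function `S`:
if `S''/(-S') ≤ C̃/α` on `(0, α₁]` with `C̃ ∈ (0,2)` and `-t S'(t)` is integrable there,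
then `(1/α) ∫₀^α S ≤ C_S S(α)` on `(0, α₁]`. -/
theorem stmt_11 (S : ℝ → ℝ) (hS : ContDiffOn ℝ 2 S (Set.Ioi 0))
    (hSpos : ∀ t > (0:ℝ), 0 < S t) (hS' : ∀ t > (0:ℝ), deriv S t < 0)
    (α₁ : ℝ) (hα₁ : 0 < α₁) (Ct : ℝ) (hCt : Ct ∈ Set.Ioo (0:ℝ) 2)
    (hint : MeasureTheory.IntegrableOn (fun t => -t * deriv S t) (Set.Ioc 0 α₁))
    (hratio : ∀ α ∈ Set.Ioc (0:ℝ) α₁, deriv (deriv S) α / (-(deriv S α)) ≤ Ct / α)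
    (hlim : Tendsto (fun α => α * S α) (nhdsWithin 0 (Set.Ioi 0)) (nhds 0)) :
    ∃ CS > (0:ℝ), ∀ α ∈ Set.Ioc (0:ℝ) α₁,
      (1 / α) * ∫ t in (0:ℝ)..α, S t ≤ CS * S α := by
  obtain ⟨hCt0, hCt2⟩ := hCt
  set p : ℝ := max Ct (3/2) with hp_def
  have hp1 : 1 < p := lt_of_lt_of_le (by norm_num) (le_max_right _ _)
  have hp2 : p < 2 := max_lt hCt2 (by norm_num)
  have hpC : Ct ≤ p := le_max_left _ _
  have hSc : ContinuousOn S (Set.Ioi 0) := hS.continuousOn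
  have hS1 : ContDiffOn ℝ 1 (deriv S) (Set.Ioi 0) := by
    have h2 : ContDiffOn ℝ (1+1 : ℕ) S (Set.Ioi (0:ℝ)) := by exact_mod_cast hS
    exact ((contDiffOn_succ_iff_deriv_of_isOpen (n := 1) isOpen_Ioi).1 (by exact_mod_cast h2)).2.2
  have hd1 : ∀ t ∈ Set.Ioi (0:ℝ), HasDerivAt S (deriv S t) t := fun t ht =>
    ((hS.differentiableOn (by norm_num)).differentiableAt (isOpen_Ioi.mem_nhds ht)).hasDerivAt
  have hd2 : ∀ t ∈ Set.Ioi (0:ℝ), HasDerivAt (deriv S) (deriv (deriv S) t) t := fun t ht =>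
    ((hS1.differentiableOn (by norm_num)).differentiableAt (isOpen_Ioi.mem_nhds ht)).hasDerivAt
  have hS'pos : ∀ t ∈ Set.Ioi (0:ℝ), 0 < -(deriv S t) := fun t ht => neg_pos.2 (hS' t ht)
  set h : ℝ → ℝ := fun t => -(deriv S t) * t ^ p with hh_def
  have hhpos : ∀ t ∈ Set.Ioi (0:ℝ), 0 < h t := fun t ht =>
    mul_pos (hS'pos t ht) (Real.rpow_pos_of_pos ht _)
  have hhc : ContinuousOn h (Set.Ioi 0) :=
    (hS1.continuousOn.neg).mul (fun t ht =>
      (Real.continuousAt_rpow_const t p (Or.inl (ne_of_gt ht))).continuousWithinAt)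
  have hhderiv : ∀ t ∈ Set.Ioi (0:ℝ), HasDerivAt h
      (-(deriv (deriv S) t) * t ^ p + -(deriv S t) * (p * t ^ (p-1))) t := fun t ht =>
    ((hd2 t ht).neg).mul (Real.hasDerivAt_rpow_const (Or.inl (ne_of_gt ht)))
  have hmono : MonotoneOn h (Set.Ioc 0 α₁) := by
    apply monotoneOn_of_deriv_nonneg (convex_Ioc _ _) (hhc.mono Set.Ioc_subset_Ioi_self)
    · rw [interior_Ioc]
      exact fun t ht => ((hhderiv t ht.1).differentiableAt).differentiableWithinAt
    · rw [interior_Ioc]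
      intro t ht
      rw [(hhderiv t ht.1).deriv]
      have ht0 : (0:ℝ) < t := ht.1
      have hs'p : 0 < -(deriv S t) := hS'pos t ht0
      have hr := hratio t ⟨ht0, ht.2.le⟩
      have h1 : deriv (deriv S) t ≤ Ct / t * -(deriv S t) := (div_le_iff₀ hs'p).1 hr
      have h2 : deriv (deriv S) t * t ≤ p * -(deriv S t) := by
        have he : Ct / t * -(deriv S t) * t = Ct * -(deriv S t) := by field_simp
        nlinarith [mul_le_mul_of_nonneg_right h1 ht0.le,
          mul_le_mul_of_nonneg_right hpC hs'p.le]
      have htp : t ^ p = t ^ (p-1) * t := by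
        conv_lhs => rw [show p = (p-1)+1 by ring]
        rw [Real.rpow_add_one (ne_of_gt ht0)]
      have hrp : (0:ℝ) ≤ t ^ (p-1) := (Real.rpow_pos_of_pos ht0 _).le
      calc (0:ℝ) ≤ t ^ (p-1) * (-(deriv (deriv S) t) * t + p * -(deriv S t)) :=
            mul_nonneg hrp (by linarith)
        _ = -(deriv (deriv S) t) * t ^ p + -(deriv S t) * (p * t ^ (p-1)) := by
            rw [htp]; ring
  have hF : ∀ (c : ℝ), ∀ s ∈ Set.Ioi (0:ℝ), HasDerivAt (fun u => S u - c * u ^ (1-p))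
      ((c * (p-1) - h s) * s ^ (-p)) s := by
    intro c s hs
    have h1 : HasDerivAt (fun u : ℝ => u ^ (1-p)) ((1-p) * s ^ (1-p-1)) s :=
      Real.hasDerivAt_rpow_const (Or.inl (ne_of_gt hs))
    have h2 := (hd1 s hs).sub (h1.const_mul c)
    refine h2.congr_deriv ?_; symm
    have hsp : s ^ p * s ^ (-p) = 1 := by
      rw [← Real.rpow_add hs]; norm_num
    have he : (1 - p - 1 : ℝ) = -p := by ring
    rw [he]
    have key : h s * s ^ (-p) = -(deriv S s) := by
      show -(deriv S s) * s ^ p * s ^ (-p) = -(deriv S s)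
      rw [mul_assoc, hsp, mul_one]
    linear_combination -key
  have bound1 : ∀ α ∈ Set.Ioc (0:ℝ) α₁, ∀ t ∈ Set.Ioc (0:ℝ) α,
      S t ≤ S α + (h α / (p-1)) * t ^ (1-p) := by
    intro α hα t ht
    have hα0 : (0:ℝ) < α := hα.1
    have hp1' : (0:ℝ) < p - 1 := by linarith
    set c : ℝ := h α / (p-1) with hc_def
    have hc : c * (p-1) = h α := div_mul_cancel₀ _ (ne_of_gt hp1')
    have hcnn : 0 ≤ c := div_nonneg (hhpos α hα0).le hp1'.le
    have hmonoF : MonotoneOn (fun u => S u - c * u ^ (1-p)) (Set.Ioc 0 α) := by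
      apply monotoneOn_of_deriv_nonneg (convex_Ioc _ _)
      · exact fun u hu => ((hF c u hu.1).continuousAt).continuousWithinAt
      · rw [interior_Ioc]
        exact fun u hu => ((hF c u hu.1).differentiableAt).differentiableWithinAt
      · rw [interior_Ioc]
        intro u hu
        rw [(hF c u hu.1).deriv, hc]
        apply mul_nonneg _ (Real.rpow_nonneg (le_of_lt hu.1) _)
        have := hmono ⟨hu.1, le_trans hu.2.le hα.2⟩ hα hu.2.le
        linarith
    have h3 := hmonoF ht ⟨hα0, le_refl α⟩ ht.2
    have h4 : 0 ≤ c * α ^ (1-p) := mul_nonneg hcnn (Real.rpow_nonneg hα0.le _)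
    simp only [] at h3
    linarith
  have hSanti : StrictAntiOn S (Set.Ioi 0) :=
    strictAntiOn_of_deriv_neg (convex_Ioi 0) hSc (by
      rw [interior_Ioi]; exact fun t ht => hS' t ht)
  have hdpos : (0:ℝ) < 1 - (2:ℝ) ^ (1-p) := by
    have := Real.rpow_lt_one_of_one_lt_of_neg (by norm_num : (1:ℝ) < 2)
      (by linarith : 1 - p < 0)
    linarith
  set K₁ : ℝ := (p-1) / (1 - (2:ℝ) ^ (1-p)) with hK1_def
  set K₂ : ℝ := h α₁ * (α₁/2) ^ (1-p) / S α₁ with hK2_def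
  have hK2nn : 0 ≤ K₂ := div_nonneg (mul_nonneg (hhpos α₁ hα₁).le
    (Real.rpow_nonneg (by linarith) _)) (hSpos α₁ hα₁).le
  set K : ℝ := max K₁ K₂ with hK_def
  have hKnn : 0 ≤ K := le_trans hK2nn (le_max_right _ _)
  have hKb : ∀ β ∈ Set.Ioc (0:ℝ) α₁, -(deriv S β) * β ≤ K * S β := by
    intro β hβ
    have hβ0 : (0:ℝ) < β := hβ.1
    have hp1' : (0:ℝ) < p - 1 := by linarith
    have hhb : -(deriv S β) * β = h β * β ^ (1-p) := by
      have hss : β ^ p * β ^ (1-p) = β := by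
        rw [← Real.rpow_add hβ0]; norm_num
      calc -(deriv S β) * β = -(deriv S β) * (β ^ p * β ^ (1-p)) := by rw [hss]
        _ = h β * β ^ (1-p) := by rw [hh_def]; ring
    rcases le_or_gt β (α₁/2) with hcase | hcase
    · set c : ℝ := h β / (p-1) with hc_def
      have hc : c * (p-1) = h β := div_mul_cancel₀ _ (ne_of_gt hp1')
      have hcnn : 0 ≤ c := div_nonneg (hhpos β hβ0).le hp1'.le
      have h2β : 2*β ≤ α₁ := by linarith
      have hanti : AntitoneOn (fun u => S u - c * u ^ (1-p)) (Set.Icc β (2*β)) := by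
        apply antitoneOn_of_deriv_nonpos (convex_Icc _ _)
        · exact fun u hu => ((hF c u (lt_of_lt_of_le hβ0 hu.1)).continuousAt).continuousWithinAt
        · rw [interior_Icc]
          exact fun u hu => ((hF c u (lt_trans hβ0 hu.1)).differentiableAt).differentiableWithinAt
        · rw [interior_Icc]
          intro u hu
          have hu0 : (0:ℝ) < u := lt_trans hβ0 hu.1
          rw [(hF c u hu0).deriv, hc]
          have hhu : h β ≤ h u := hmono hβ ⟨hu0, by linarith [hu.2]⟩ hu.1.le
          exact mul_nonpos_of_nonpos_of_nonneg (by linarith) (Real.rpow_nonneg hu0.le _)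
      have h5 := hanti (Set.mem_Icc.2 ⟨le_refl β, by linarith⟩)
        (Set.mem_Icc.2 ⟨by linarith, le_refl (2*β)⟩) (by linarith)
      have hm : (2*β) ^ (1-p) = 2 ^ (1-p) * β ^ (1-p) := Real.mul_rpow (by norm_num) hβ0.le
      have hS2β : 0 < S (2*β) := hSpos _ (by linarith)
      have hβp : (0:ℝ) ≤ β ^ (1-p) := Real.rpow_nonneg hβ0.le _
      have h6 : c * β ^ (1-p) * (1 - 2 ^ (1-p)) ≤ S β := by
        simp only [] at h5; rw [hm] at h5; nlinarith
      have h7 : h β * β ^ (1-p) ≤ K₁ * S β := by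
        have h6' : h β * β ^ (1-p) * (1 - 2 ^ (1-p)) ≤ (p-1) * S β := by
          rw [← hc]; nlinarith
        have := (le_div_iff₀ hdpos).2 h6'
        rw [hK1_def, div_mul_eq_mul_div]
        linarith
      rw [hhb]
      calc h β * β ^ (1-p) ≤ K₁ * S β := h7
        _ ≤ K * S β := mul_le_mul_of_nonneg_right (le_max_left _ _) (hSpos β hβ0).le
    · have hhb2 : h β ≤ h α₁ := hmono hβ ⟨hα₁, le_refl _⟩ hβ.2
      have hr : β ^ (1-p) ≤ (α₁/2) ^ (1-p) :=
        Real.rpow_le_rpow_of_nonpos (half_pos hα₁) hcase.le (by linarith)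
      have hSb : S α₁ ≤ S β := by
        rcases eq_or_lt_of_le hβ.2 with he | hl
        · rw [he]
        · exact (hSanti hβ.1 hα₁ hl).le
      have h8 : h β * β ^ (1-p) ≤ h α₁ * (α₁/2) ^ (1-p) :=
        mul_le_mul hhb2 hr (Real.rpow_nonneg hβ0.le _) (hhpos α₁ hα₁).le
      have h9 : K₂ * S α₁ = h α₁ * (α₁/2) ^ (1-p) :=
        div_mul_cancel₀ _ (ne_of_gt (hSpos α₁ hα₁))
      have h10 : h β * β ^ (1-p) ≤ K₂ * S β := by
        nlinarith [mul_le_mul_of_nonneg_left hSb hK2nn]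
      rw [hhb]
      calc h β * β ^ (1-p) ≤ K₂ * S β := h10
        _ ≤ K * S β := mul_le_mul_of_nonneg_right (le_max_right _ _) (hSpos β hβ0).le
  have hD : (0:ℝ) < (p-1)*(2-p) := mul_pos (by linarith) (by linarith)
  refine ⟨1 + K / ((p-1)*(2-p)), by positivity, ?_⟩
  intro α hα
  have hα0 : (0:ℝ) < α := hα.1
  have hp1' : (0:ℝ) < p-1 := by linarith
  set c : ℝ := h α / (p-1) with hc_def
  have hcnn : 0 ≤ c := div_nonneg (hhpos α hα0).le hp1'.le
  have hrint : IntervalIntegrable (fun t : ℝ => t ^ (1-p)) MeasureTheory.volume 0 α :=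
    intervalIntegral.intervalIntegrable_rpow' (by linarith)
  have hgint : IntervalIntegrable (fun t : ℝ => S α + c * t ^ (1-p)) MeasureTheory.volume 0 α :=
    intervalIntegrable_const.add (hrint.const_mul c)
  have hgint' : MeasureTheory.IntegrableOn (fun t : ℝ => S α + c * t ^ (1-p)) (Set.Ioc 0 α) :=
    (intervalIntegrable_iff_integrableOn_Ioc_of_le hα0.le).1 hgint
  have hSmeas : MeasureTheory.AEStronglyMeasurable S
      (MeasureTheory.volume.restrict (Set.Ioc 0 α)) :=
    (hSc.mono Set.Ioc_subset_Ioi_self).aestronglyMeasurable measurableSet_Ioc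
  have hSint : MeasureTheory.IntegrableOn S (Set.Ioc 0 α) := by
    apply MeasureTheory.Integrable.mono' hgint' hSmeas
    refine (MeasureTheory.ae_restrict_iff' measurableSet_Ioc).2 (Filter.Eventually.of_forall ?_)
    intro t ht
    rw [Real.norm_eq_abs, abs_of_pos (hSpos t ht.1)]
    exact bound1 α hα t ht
  have hmain : ∫ t in (0:ℝ)..α, S t ≤ α * S α + c * (α ^ (2-p) / (2-p)) := by
    rw [intervalIntegral.integral_of_le hα0.le]
    have step1 : ∫ t in Set.Ioc (0:ℝ) α, S t ≤ ∫ t in Set.Ioc (0:ℝ) α, (S α + c * t ^ (1-p)) :=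
      MeasureTheory.setIntegral_mono_on hSint hgint' measurableSet_Ioc
        (fun t ht => bound1 α hα t ht)
    have step2 : (∫ t in Set.Ioc (0:ℝ) α, (S α + c * t ^ (1-p)))
        = α * S α + c * (α ^ (2-p) / (2-p)) := by
      rw [← intervalIntegral.integral_of_le hα0.le,
        intervalIntegral.integral_add intervalIntegrable_const (hrint.const_mul c),
        intervalIntegral.integral_const, intervalIntegral.integral_const_mul,
        integral_rpow (Or.inl (by linarith : (-1:ℝ) < 1-p)),
        show (1-p+1 : ℝ) = 2-p by ring,
        Real.zero_rpow (by intro hzz; linarith [hzz] : (2-p:ℝ) ≠ 0)]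
      simp [smul_eq_mul]
    linarith
  have hsum : α ^ p * α ^ (2-p) = α * α := by
    rw [← Real.rpow_add hα0, show (p + (2-p):ℝ) = 2 by ring,
      show (2:ℝ) = ((2:ℕ):ℝ) by norm_num, Real.rpow_natCast]
    ring
  have h10 : h α * α ^ (2-p) = (-(deriv S α) * α) * α := by
    calc h α * α ^ (2-p) = -(deriv S α) * (α ^ p * α ^ (2-p)) := by rw [hh_def]; ring
      _ = (-(deriv S α) * α) * α := by rw [hsum]; ring
  have h11 : h α * α ^ (2-p) ≤ K * S α * α :=
    h10 ▸ mul_le_mul_of_nonneg_right (hKb α hα) hα0.le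
  have hca : c * (α ^ (2-p) / (2-p)) ≤ K * S α * α / ((p-1)*(2-p)) := by
    have e1 : c * (α ^ (2-p) / (2-p)) = h α * α ^ (2-p) / ((p-1)*(2-p)) := by
      rw [hc_def]; field_simp
    rw [e1]
    exact div_le_div_of_nonneg_right h11 hD.le
  have hfin : ∫ t in (0:ℝ)..α, S t ≤ α * ((1 + K / ((p-1)*(2-p))) * S α) := by
    have e2 : α * ((1 + K / ((p-1)*(2-p))) * S α)
        = α * S α + K * S α * α / ((p-1)*(2-p)) := by
      field_simp
    linarith
  calc (1/α) * ∫ t in (0:ℝ)..α, S t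
      ≤ (1/α) * (α * ((1 + K / ((p-1)*(2-p))) * S α)) :=
        mul_le_mul_of_nonneg_left hfin (by positivity)
    _ = (1 + K / ((p-1)*(2-p))) * S α := by
        rw [← mul_assoc, one_div, inv_mul_cancel₀ (ne_of_gt hα0), one_mul]
end

section
/- Let q: [0, λ₁] → ℝ≥0 satisfy α·q(λ) ≤ C' and λ·q(λ) ≤ C'' for all λ ∈ [0, λ₁] (for fixed α > 0 and constants C', C'' > 0), and let Σ: (0,∞) → ℝ≥0 be non-increasing and right-continuous with Σ(t) = 0 for t > λ₁ and ∫₀^{λ₁} Σ(t) dt < ∞. Then −∫₀^∞ t·q(t)² dΣ(t) ≤ (max{C',C''})²·(1/α²)·∫₀^α Σ(t) dt. -/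
open MeasureTheory

/-- Integration-by-parts estimate from the Comparison Lemma:
`-∫ t q(t)² dSig(t) ≤ (max{C',C''})² (1/α²) ∫₀^α Sig(t) dt`, where `μ = -dSig` is the
point-mass measure of the eigenvalues with counting function `Sig`. -/
theorem stmt_15 (lam1 α C' C'' : ℝ) (hlam1 : 0 < lam1) (hα : 0 < α)
    (hC' : 0 < C') (hC'' : 0 < C'')
    (q : ℝ → ℝ) (hq0 : ∀ l ∈ Set.Icc (0:ℝ) lam1, 0 ≤ q l)
    (hq1 : ∀ l ∈ Set.Icc (0:ℝ) lam1, α * q l ≤ C')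
    (hq2 : ∀ l ∈ Set.Icc (0:ℝ) lam1, l * q l ≤ C'')
    (Sig : ℝ → ℝ) (hSignonneg : ∀ t > (0:ℝ), 0 ≤ Sig t)
    (hSiganti : AntitoneOn Sig (Set.Ioi 0))
    (hSigrc : ∀ t > (0:ℝ), ContinuousWithinAt Sig (Set.Ici t) t)
    (hSig0 : ∀ t > lam1, Sig t = 0)
    (hSigint : IntegrableOn Sig (Set.Ioc 0 lam1))
    (μ : Measure ℝ)
    (hμ : ∀ s t : ℝ, 0 < s → s ≤ t → μ (Set.Ioc s t) = ENNReal.ofReal (Sig s - Sig t))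
    (hμsupp : μ (Set.Iic 0) = 0 ∧ μ (Set.Ioi lam1) = 0) :
    ∫ t, t * (q t) ^ 2 ∂μ ≤
      (max C' C'') ^ 2 * (1 / α ^ 2) * ∫ t in (0:ℝ)..α, Sig t := by
  set M := max C' C'' with hMdef
  have hM0 : 0 < M := lt_max_of_lt_left hC'
  have hc0 : (0:ℝ) ≤ M ^ 2 / α ^ 2 := by positivity
  -- μ-a.e. every point is in (0, lam1]
  have hnull : μ (Set.Ioc 0 lam1)ᶜ = 0 := by
    have hsub : (Set.Ioc (0:ℝ) lam1)ᶜ ⊆ Set.Iic 0 ∪ Set.Ioi lam1 := by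
      intro x hx
      simp only [Set.mem_compl_iff, Set.mem_Ioc, not_and_or, not_lt, not_le] at hx
      rcases hx with h | h
      · exact Or.inl h
      · exact Or.inr h
    refine le_antisymm ?_ zero_le
    calc μ (Set.Ioc (0:ℝ) lam1)ᶜ ≤ μ (Set.Iic 0 ∪ Set.Ioi lam1) := measure_mono hsub
      _ ≤ μ (Set.Iic 0) + μ (Set.Ioi lam1) := measure_union_le _ _
      _ = 0 := by rw [hμsupp.1, hμsupp.2, add_zero]
  have hae : ∀ᵐ t ∂μ, t ∈ Set.Ioc (0:ℝ) lam1 := mem_ae_iff.mpr hnull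
  -- pointwise bound on (0, lam1]
  have key : ∀ t ∈ Set.Ioc (0:ℝ) lam1, t * q t ^ 2 ≤ M ^ 2 / α ^ 2 * min t α := by
    intro t ht
    have hmem : t ∈ Set.Icc (0:ℝ) lam1 := ⟨ht.1.le, ht.2⟩
    have hq0' := hq0 t hmem
    have hqM : q t ≤ M / α := by
      rw [le_div_iff₀ hα]
      have := hq1 t hmem
      have := le_max_left C' C''
      nlinarith
    rcases le_total t α with h | h
    · have hmin : min t α = t := min_eq_left h
      have h1 : q t ^ 2 ≤ (M / α) ^ 2 := by nlinarith
      have : t * q t ^ 2 ≤ t * (M / α) ^ 2 :=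
        mul_le_mul_of_nonneg_left h1 ht.1.le
      rw [hmin]
      calc t * q t ^ 2 ≤ t * (M / α) ^ 2 := this
        _ = M ^ 2 / α ^ 2 * t := by field_simp
    · have hmin : min t α = α := min_eq_right h
      have h1 : t * q t ≤ M := le_trans (hq2 t hmem) (le_max_right _ _)
      have h2 : t * q t ^ 2 = (t * q t) * q t := by ring
      calc t * q t ^ 2 = (t * q t) * q t := h2
        _ ≤ M * (M / α) :=
          mul_le_mul h1 hqM hq0' hM0.le
        _ = M ^ 2 / α ^ 2 * min t α := by rw [hmin]; field_simp
  -- nonnegativity of the RHS integral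
  have hIαnn : 0 ≤ ∫ s in Set.Ioc (0:ℝ) α, Sig s :=
    setIntegral_nonneg measurableSet_Ioc (fun x hx => hSignonneg x hx.1)
  have hRHS : (0:ℝ) ≤ M ^ 2 * (1 / α ^ 2) * ∫ t in (0:ℝ)..α, Sig t := by
    rw [intervalIntegral.integral_of_le hα.le]
    positivity
  by_cases hint : Integrable (fun t => t * q t ^ 2) μ
  swap
  · rw [integral_undef hint]; exact hRHS
  -- integrability of Sig on (0, α]
  set β := min α lam1 with hβdef
  have hβα : β ≤ α := min_le_left _ _
  have hβlam : β ≤ lam1 := min_le_right _ _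
  have hSigIntβ : IntegrableOn Sig (Set.Ioc 0 β) :=
    hSigint.mono_set (Set.Ioc_subset_Ioc_right hβlam)
  have hSigIntα : IntegrableOn Sig (Set.Ioc 0 α) := by
    rcases le_total α lam1 with h | h
    · exact hSigint.mono_set (Set.Ioc_subset_Ioc_right h)
    · have : Set.Ioc (0:ℝ) lam1 ∪ Set.Ioc lam1 α = Set.Ioc 0 α :=
        Set.Ioc_union_Ioc_eq_Ioc hlam1.le h
      rw [← this]
      refine hSigint.union ?_
      exact (integrableOn_zero (μ := volume) (s := Set.Ioc lam1 α)).congr_fun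
        (fun t ht => (hSig0 t ht.1).symm) measurableSet_Ioc
  -- layer cake for min t α
  have hmin_mble : AEMeasurable (fun t : ℝ => min t α) μ :=
    (measurable_id.min measurable_const).aemeasurable
  have hmin_nn : 0 ≤ᵐ[μ] fun t : ℝ => min t α := by
    filter_upwards [hae] with t ht
    exact le_min ht.1.le hα.le
  have hlc := lintegral_eq_lintegral_meas_lt μ hmin_nn hmin_mble
  -- tail bound
  have htail : ∀ s ∈ Set.Ioi (0:ℝ), μ {a : ℝ | s < min a α} ≤
      Set.indicator (Set.Ioc 0 β) (fun s => ENNReal.ofReal (Sig s)) s := by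
    intro s hs
    have hs0 : (0:ℝ) < s := hs
    by_cases hsα : s < α
    · by_cases hslam : s ≤ lam1
      · have hsβ : s ∈ Set.Ioc (0:ℝ) β := ⟨hs0, le_min hsα.le hslam⟩
        rw [Set.indicator_of_mem hsβ]
        have hset : {a : ℝ | s < min a α} ⊆ Set.Ioc s lam1 ∪ Set.Ioi lam1 := by
          intro a ha
          have ha' : s < a := lt_of_lt_of_le ha (min_le_left _ _)
          by_cases h : a ≤ lam1
          · exact Or.inl ⟨ha', h⟩
          · exact Or.inr (lt_of_not_ge h)
        calc μ {a : ℝ | s < min a α} ≤ μ (Set.Ioc s lam1 ∪ Set.Ioi lam1) := measure_mono hset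
          _ ≤ μ (Set.Ioc s lam1) + μ (Set.Ioi lam1) := measure_union_le _ _
          _ = ENNReal.ofReal (Sig s - Sig lam1) := by
              rw [hμsupp.2, add_zero, hμ s lam1 hs0 hslam]
          _ ≤ ENNReal.ofReal (Sig s) :=
              ENNReal.ofReal_le_ofReal (by linarith [hSignonneg lam1 hlam1])
      · have hslam' : lam1 < s := lt_of_not_ge hslam
        have hset : {a : ℝ | s < min a α} ⊆ Set.Ioi lam1 := by
          intro a ha
          have ha' : s < a := lt_of_lt_of_le ha (min_le_left _ _)
          exact lt_trans hslam' ha'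
        calc μ {a : ℝ | s < min a α} ≤ μ (Set.Ioi lam1) := measure_mono hset
          _ = 0 := hμsupp.2
          _ ≤ _ := zero_le
    · have hset : {a : ℝ | s < min a α} = ∅ := by
        ext a
        simp only [Set.mem_setOf_eq, Set.mem_empty_iff_false, iff_false, not_lt]
        exact le_trans (min_le_right _ _) (le_of_not_gt hsα)
      rw [hset]
      simp
  -- main lintegral bound for min
  have hmain : ∫⁻ t, ENNReal.ofReal (min t α) ∂μ ≤
      ENNReal.ofReal (∫ s in Set.Ioc (0:ℝ) β, Sig s) := by
    rw [hlc]
    have hSignn_ae : 0 ≤ᵐ[volume.restrict (Set.Ioc (0:ℝ) β)] Sig := by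
      refine (ae_restrict_iff' measurableSet_Ioc).mpr ?_
      exact ae_of_all _ (fun x hx => hSignonneg x hx.1)
    calc ∫⁻ s in Set.Ioi (0:ℝ), μ {a : ℝ | s < min a α}
        ≤ ∫⁻ s in Set.Ioi (0:ℝ),
            Set.indicator (Set.Ioc 0 β) (fun s => ENNReal.ofReal (Sig s)) s :=
          setLIntegral_mono' measurableSet_Ioi htail
      _ = ∫⁻ s in Set.Ioc (0:ℝ) β, ENNReal.ofReal (Sig s) := by
          rw [lintegral_indicator measurableSet_Ioc,
            Measure.restrict_restrict measurableSet_Ioc]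
          congr 1
          rw [Set.inter_eq_left.mpr]
          intro x hx
          exact hx.1
      _ = ENNReal.ofReal (∫ s in Set.Ioc (0:ℝ) β, Sig s) :=
          (ofReal_integral_eq_lintegral_ofReal hSigIntβ hSignn_ae).symm
  have hβtoα : ∫ s in Set.Ioc (0:ℝ) β, Sig s ≤ ∫ s in Set.Ioc (0:ℝ) α, Sig s := by
    refine setIntegral_mono_set hSigIntα ?_ ?_
    · refine (ae_restrict_iff' measurableSet_Ioc).mpr ?_
      exact ae_of_all _ (fun x hx => hSignonneg x hx.1)
    · exact HasSubset.Subset.eventuallyLE (Set.Ioc_subset_Ioc_right hβα)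
  -- assemble
  have hnn : 0 ≤ᵐ[μ] fun t => t * q t ^ 2 := by
    filter_upwards [hae] with t ht
    exact mul_nonneg ht.1.le (sq_nonneg _)
  rw [integral_eq_lintegral_of_nonneg_ae hnn hint.1]
  have hb : ∫⁻ t, ENNReal.ofReal (t * q t ^ 2) ∂μ ≤
      ENNReal.ofReal (M ^ 2 / α ^ 2) * ENNReal.ofReal (∫ s in Set.Ioc (0:ℝ) α, Sig s) := by
    calc ∫⁻ t, ENNReal.ofReal (t * q t ^ 2) ∂μ
        ≤ ∫⁻ t, ENNReal.ofReal (M ^ 2 / α ^ 2 * min t α) ∂μ := by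
          refine lintegral_mono_ae ?_
          filter_upwards [hae] with t ht
          exact ENNReal.ofReal_le_ofReal (key t ht)
      _ = ∫⁻ t, ENNReal.ofReal (M ^ 2 / α ^ 2) * ENNReal.ofReal (min t α) ∂μ := by
          simp_rw [ENNReal.ofReal_mul hc0]
      _ = ENNReal.ofReal (M ^ 2 / α ^ 2) * ∫⁻ t, ENNReal.ofReal (min t α) ∂μ :=
          lintegral_const_mul' _ _ ENNReal.ofReal_ne_top
      _ ≤ ENNReal.ofReal (M ^ 2 / α ^ 2) * ENNReal.ofReal (∫ s in Set.Ioc (0:ℝ) α, Sig s) :=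
          mul_le_mul_right (hmain.trans (ENNReal.ofReal_le_ofReal hβtoα)) _
  calc (∫⁻ t, ENNReal.ofReal (t * q t ^ 2) ∂μ).toReal
      ≤ (ENNReal.ofReal (M ^ 2 / α ^ 2) *
          ENNReal.ofReal (∫ s in Set.Ioc (0:ℝ) α, Sig s)).toReal :=
        ENNReal.toReal_mono (ENNReal.mul_ne_top ENNReal.ofReal_ne_top ENNReal.ofReal_ne_top) hb
    _ = (M ^ 2 / α ^ 2) * ∫ s in Set.Ioc (0:ℝ) α, Sig s := by
        rw [← ENNReal.ofReal_mul hc0, ENNReal.toReal_ofReal (by positivity)]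
    _ = M ^ 2 * (1 / α ^ 2) * ∫ t in (0:ℝ)..α, Sig t := by
        rw [intervalIntegral.integral_of_le hα.le]
        ring
end

section
/- Let q: [0, λ₁] → ℝ≥0 satisfy α·q(λ) ≤ C' and λ·q(λ) ≤ C'' for all λ ∈ [0, λ₁] (for fixed α > 0), and Σ as above be non-increasing, right-continuous, vanishing for t > λ₁, with ∫₀^{λ₁} Σ(t) dt < ∞. Then −∫₀^∞ t²·q(t)⁴ dΣ(t) ≤ 2·(max{C',C''})⁴·(1/α³)·∫₀^α Σ(t) dt. -/
open MeasureTheory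

/-- Second integration-by-parts estimate from the Comparison Lemma:
`-∫ t² q(t)⁴ dSig(t) ≤ 2 (max{C',C''})⁴ (1/α³) ∫₀^α Sig(t) dt`. -/
theorem stmt_16 (lam1 α C' C'' : ℝ) (hlam1 : 0 < lam1) (hα : 0 < α)
    (hC' : 0 < C') (hC'' : 0 < C'')
    (q : ℝ → ℝ) (hq0 : ∀ l ∈ Set.Icc (0:ℝ) lam1, 0 ≤ q l)
    (hq1 : ∀ l ∈ Set.Icc (0:ℝ) lam1, α * q l ≤ C')
    (hq2 : ∀ l ∈ Set.Icc (0:ℝ) lam1, l * q l ≤ C'')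
    (Sig : ℝ → ℝ) (hSignonneg : ∀ t > (0:ℝ), 0 ≤ Sig t)
    (hSiganti : AntitoneOn Sig (Set.Ioi 0))
    (hSigrc : ∀ t > (0:ℝ), ContinuousWithinAt Sig (Set.Ici t) t)
    (hSig0 : ∀ t > lam1, Sig t = 0)
    (hSigint : IntegrableOn Sig (Set.Ioc 0 lam1))
    (μ : Measure ℝ)
    (hμ : ∀ s t : ℝ, 0 < s → s ≤ t → μ (Set.Ioc s t) = ENNReal.ofReal (Sig s - Sig t))
    (hμsupp : μ (Set.Iic 0) = 0 ∧ μ (Set.Ioi lam1) = 0) :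
    ∫ t, t ^ 2 * (q t) ^ 4 ∂μ ≤
      2 * (max C' C'') ^ 4 * (1 / α ^ 3) * ∫ t in (0:ℝ)..α, Sig t := by
  obtain ⟨hμ0, hμlam⟩ := hμsupp
  set M : ℝ := max C' C'' with hMdef
  have hM : 0 < M := lt_of_lt_of_le hC' (le_max_left _ _)
  -- μ(Ioi s) ≤ ofReal (Sig s) for s > 0
  have hIoi : ∀ s : ℝ, 0 < s → μ (Set.Ioi s) ≤ ENNReal.ofReal (Sig s) := by
    intro s hs
    rcases le_or_gt s lam1 with h | h
    · have hset : Set.Ioi s = Set.Ioc s lam1 ∪ Set.Ioi lam1 :=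
        (Set.Ioc_union_Ioi_eq_Ioi h).symm
      calc μ (Set.Ioi s) ≤ μ (Set.Ioc s lam1) + μ (Set.Ioi lam1) := by
            rw [hset]; exact measure_union_le _ _
        _ = ENNReal.ofReal (Sig s - Sig lam1) := by rw [hμ s lam1 hs h, hμlam, add_zero]
        _ ≤ ENNReal.ofReal (Sig s) :=
            ENNReal.ofReal_le_ofReal (by linarith [hSignonneg lam1 hlam1])
    · calc μ (Set.Ioi s) ≤ μ (Set.Ioi lam1) := measure_mono (Set.Ioi_subset_Ioi h.le)
        _ = 0 := hμlam
        _ ≤ _ := zero_le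
  -- μ is sigma-finite
  have hsf : SigmaFinite μ := by
    refine ⟨⟨⟨fun n => Set.Iic 0 ∪ Set.Ioi (lam1 / (n + 1)), fun _ => trivial, ?_, ?_⟩⟩⟩
    · intro n
      have hpos : (0:ℝ) < lam1 / (n + 1) := by positivity
      calc μ (Set.Iic 0 ∪ Set.Ioi (lam1 / (n + 1)))
          ≤ μ (Set.Iic 0) + μ (Set.Ioi (lam1 / (n + 1))) := measure_union_le _ _
        _ ≤ 0 + ENNReal.ofReal (Sig (lam1 / (n + 1))) := by
            rw [hμ0]; exact add_le_add le_rfl (hIoi _ hpos)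
        _ < ⊤ := by simp [ENNReal.ofReal_lt_top]
    · refine Set.eq_univ_of_forall fun x => ?_
      rcases le_or_gt x 0 with hx | hx
      · exact Set.mem_iUnion.mpr ⟨0, Or.inl hx⟩
      · obtain ⟨n, hn⟩ := exists_nat_gt (lam1 / x)
        refine Set.mem_iUnion.mpr ⟨n, Or.inr ?_⟩
        have : lam1 / (n + 1) < x := by
          rw [div_lt_iff₀ (by positivity)]
          rw [div_lt_iff₀ hx] at hn
          nlinarith
        exact this
  -- pointwise bound
  have hpt : ∀ t ∈ Set.Ioc (0:ℝ) lam1,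
      t ^ 2 * q t ^ 4 ≤ M ^ 4 / α ^ 4 * (min t α) ^ 2 := by
    intro t ht
    have htmem : t ∈ Set.Icc (0:ℝ) lam1 := ⟨ht.1.le, ht.2⟩
    have hq0' := hq0 t htmem
    rcases le_or_gt t α with hta | hta
    · rw [min_eq_left hta]
      have hqt : q t ≤ M / α := by
        rw [le_div_iff₀ hα]
        calc q t * α = α * q t := mul_comm _ _
          _ ≤ C' := hq1 t htmem
          _ ≤ M := le_max_left _ _
      have h4 : q t ^ 4 ≤ (M / α) ^ 4 := pow_le_pow_left₀ hq0' hqt 4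
      have : (M / α) ^ 4 = M ^ 4 / α ^ 4 := div_pow M α 4
      calc t ^ 2 * q t ^ 4 ≤ t ^ 2 * (M ^ 4 / α ^ 4) := by
            rw [← this]; exact mul_le_mul_of_nonneg_left h4 (sq_nonneg t)
        _ = M ^ 4 / α ^ 4 * t ^ 2 := mul_comm _ _
    · rw [min_eq_right hta.le]
      have htq : t * q t ≤ M := le_trans (hq2 t htmem) (le_max_right _ _)
      have h1 : (t * q t) ^ 4 ≤ M ^ 4 :=
        pow_le_pow_left₀ (mul_nonneg ht.1.le hq0') htq 4
      have h2 : α ^ 2 * (t ^ 2 * q t ^ 4) ≤ M ^ 4 := by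
        have ha2 : α ^ 2 ≤ t ^ 2 := by nlinarith
        have hnn : 0 ≤ t ^ 2 * q t ^ 4 := by positivity
        calc α ^ 2 * (t ^ 2 * q t ^ 4) ≤ t ^ 2 * (t ^ 2 * q t ^ 4) :=
              mul_le_mul_of_nonneg_right ha2 hnn
          _ = (t * q t) ^ 4 := by ring
          _ ≤ M ^ 4 := h1
      have key : t ^ 2 * q t ^ 4 ≤ M ^ 4 / α ^ 2 := by
        rw [le_div_iff₀ (by positivity : (0:ℝ) < α ^ 2)]
        linarith [h2]
      have : M ^ 4 / α ^ 4 * α ^ 2 = M ^ 4 / α ^ 2 := by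
        field_simp
      linarith [key]
  -- a.e. support of μ
  have hcompl : (Set.Ioc (0:ℝ) lam1)ᶜ = Set.Iic 0 ∪ Set.Ioi lam1 := by
    ext x
    simp only [Set.mem_compl_iff, Set.mem_Ioc, not_and_or, not_lt, not_le,
      Set.mem_union, Set.mem_Iic, Set.mem_Ioi]
  have hae : ∀ᵐ t ∂μ, t ∈ Set.Ioc (0:ℝ) lam1 := by
    refine mem_ae_iff.mpr ?_
    show μ (Set.Ioc (0:ℝ) lam1)ᶜ = 0
    rw [hcompl]
    exact le_antisymm (le_trans (measure_union_le _ _) (by rw [hμ0, hμlam]; simp))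
      (zero_le)
  -- the truncated-square integral computation
  set ν : Measure ℝ := volume.restrict (Set.Ioc 0 α) with hν
  set g : ℝ → ℝ → ENNReal := fun t s => if s < t then ENNReal.ofReal (2 * s) else 0
    with hg
  have hkey : ∀ t : ℝ, 0 < t →
      ENNReal.ofReal ((min t α) ^ 2) = ∫⁻ s, g t s ∂ν := by
    intro t ht
    set m : ℝ := min t α with hm
    have hmpos : 0 < m := lt_min ht hα
    have e1 : ∀ s, g t s = (Set.Iio t).indicator (fun s => ENNReal.ofReal (2 * s)) s := by
      intro s; simp [hg, Set.indicator_apply, Set.mem_Iio]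
    have e2 : ∫⁻ s, g t s ∂ν
        = ∫⁻ s in Set.Iio t ∩ Set.Ioc 0 α, ENNReal.ofReal (2 * s) := by
      simp_rw [e1]
      rw [hν, lintegral_indicator measurableSet_Iio,
        Measure.restrict_restrict measurableSet_Iio]
    have e3 : (Set.Iio t ∩ Set.Ioc 0 α : Set ℝ) =ᵐ[volume] Set.Ioc (0:ℝ) m := by
      rw [MeasureTheory.ae_eq_set]
      constructor
      · refine measure_mono_null (fun s hs => ?_) (measure_empty)
        exfalso
        obtain ⟨⟨hs1, hs2, hs3⟩, hs4⟩ := hs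
        exact hs4 ⟨hs2, le_min (le_of_lt hs1) hs3⟩
      · refine measure_mono_null (fun s hs => ?_) (measure_singleton m)
        obtain ⟨⟨hs1, hs2⟩, hs3⟩ := hs
        have hsm : s ≤ m := hs2
        have : ¬(s < t ∧ 0 < s ∧ s ≤ α) := by
          intro h; exact hs3 ⟨h.1, h.2.1, h.2.2⟩
        have hsa : s ≤ α := le_trans hsm (min_le_right _ _)
        have hst : ¬ s < t := fun h => this ⟨h, hs1, hsa⟩
        have : t ≤ s := not_lt.mp hst
        have : s = m := le_antisymm hsm (le_trans (min_le_left _ _) this)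
        simpa using this
      -- done
    have e4 : ∫⁻ s in Set.Iio t ∩ Set.Ioc 0 α, ENNReal.ofReal (2 * s)
        = ∫⁻ s in Set.Ioc (0:ℝ) m, ENNReal.ofReal (2 * s) :=
      setLIntegral_congr e3
    have e5 : ∫⁻ s in Set.Ioc (0:ℝ) m, ENNReal.ofReal (2 * s)
        = ENNReal.ofReal (m ^ 2) := by
      rw [← ofReal_integral_eq_lintegral_ofReal (f := fun s : ℝ => 2 * s)
        ((by continuity : Continuous fun s : ℝ => 2 * s).integrableOn_Ioc)
        ((ae_restrict_iff' measurableSet_Ioc).mpr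
          (Filter.Eventually.of_forall fun s hs => by
            simp only [Pi.zero_apply]; linarith [hs.1]))]
      congr 1
      rw [← intervalIntegral.integral_of_le hmpos.le,
        intervalIntegral.integral_const_mul, integral_id]
      ring
    rw [e2, e4, e5]
  -- swap
  haveI := hsf
  have hswap : ∫⁻ t, (∫⁻ s, g t s ∂ν) ∂μ = ∫⁻ s, (∫⁻ t, g t s ∂μ) ∂ν := by
    refine lintegral_lintegral_swap ?_
    have : Measurable (Function.uncurry g) := by
      have : Function.uncurry g = fun p : ℝ × ℝ =>
          if p.2 < p.1 then ENNReal.ofReal (2 * p.2) else 0 := rfl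
      rw [this]
      exact Measurable.ite (measurableSet_lt measurable_snd measurable_fst)
        ((measurable_const.mul measurable_snd).ennreal_ofReal) measurable_const
    exact this.aemeasurable
  -- inner integral
  have hinner : ∀ s : ℝ, ∫⁻ t, g t s ∂μ = ENNReal.ofReal (2 * s) * μ (Set.Ioi s) := by
    intro s
    have : ∀ t, g t s = (Set.Ioi s).indicator (fun _ => ENNReal.ofReal (2 * s)) t := by
      intro t; simp [hg, Set.indicator_apply, Set.mem_Ioi]
    simp_rw [this]
    rw [lintegral_indicator measurableSet_Ioi, setLIntegral_const]
  -- integrability of Sig on Ioc 0 α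
  have hSigα : IntegrableOn Sig (Set.Ioc 0 α) := by
    rcases le_total α lam1 with h | h
    · exact hSigint.mono_set (Set.Ioc_subset_Ioc le_rfl h)
    · have : Set.Ioc (0:ℝ) α = Set.Ioc 0 lam1 ∪ Set.Ioc lam1 α := by
        rw [Set.Ioc_union_Ioc_eq_Ioc hlam1.le h]
      rw [this]
      refine hSigint.union ?_
      exact (integrableOn_zero).congr_fun (fun x hx => (hSig0 x hx.1).symm)
        measurableSet_Ioc
  set I : ℝ := ∫ s in Set.Ioc (0:ℝ) α, Sig s with hI
  have hInn : 0 ≤ I :=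
    setIntegral_nonneg measurableSet_Ioc fun x hx => hSignonneg x hx.1
  -- bound on the ν-integral
  have hbound : ∫⁻ s, (∫⁻ t, g t s ∂μ) ∂ν ≤ ENNReal.ofReal (2 * α * I) := by
    have step1 : ∫⁻ s, (∫⁻ t, g t s ∂μ) ∂ν
        ≤ ∫⁻ s, ENNReal.ofReal (2 * α * Sig s) ∂ν := by
      refine lintegral_mono_ae ?_
      filter_upwards [ae_restrict_mem measurableSet_Ioc] with s hs
      rw [hinner s]
      calc ENNReal.ofReal (2 * s) * μ (Set.Ioi s)
          ≤ ENNReal.ofReal (2 * s) * ENNReal.ofReal (Sig s) :=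
            mul_le_mul_right (hIoi s hs.1) _
        _ = ENNReal.ofReal (2 * s * Sig s) := by
            rw [ENNReal.ofReal_mul (by linarith [hs.1] : (0:ℝ) ≤ 2 * s)]
        _ ≤ ENNReal.ofReal (2 * α * Sig s) := by
            refine ENNReal.ofReal_le_ofReal ?_
            have := hSignonneg s hs.1
            nlinarith [hs.2]
    have step2 : ∫⁻ s, ENNReal.ofReal (2 * α * Sig s) ∂ν
        = ENNReal.ofReal (2 * α * I) := by
      rw [← ofReal_integral_eq_lintegral_ofReal (hSigα.const_mul (2 * α))
        ((ae_restrict_iff' measurableSet_Ioc).mpr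
          (Filter.Eventually.of_forall fun s hs => by
            simp only [Pi.zero_apply]
            have h := hSignonneg s hs.1; positivity))]
      congr 1
      rw [hI, ← integral_const_mul]
    exact step1.trans (le_of_eq step2)
  -- main lintegral chain
  have hmeas_min : Measurable fun t : ℝ => ENNReal.ofReal ((min t α) ^ 2) :=
    ((measurable_id.min measurable_const).pow_const 2).ennreal_ofReal
  have hchain : ∫⁻ t, ENNReal.ofReal (t ^ 2 * q t ^ 4) ∂μ
      ≤ ENNReal.ofReal (2 * M ^ 4 * (1 / α ^ 3) * I) := by
    calc ∫⁻ t, ENNReal.ofReal (t ^ 2 * q t ^ 4) ∂μ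
        ≤ ∫⁻ t, ENNReal.ofReal (M ^ 4 / α ^ 4) * ENNReal.ofReal ((min t α) ^ 2) ∂μ := by
          refine lintegral_mono_ae ?_
          filter_upwards [hae] with t ht
          rw [← ENNReal.ofReal_mul (by positivity : (0:ℝ) ≤ M ^ 4 / α ^ 4)]
          exact ENNReal.ofReal_le_ofReal (hpt t ht)
      _ = ENNReal.ofReal (M ^ 4 / α ^ 4) * ∫⁻ t, ENNReal.ofReal ((min t α) ^ 2) ∂μ :=
          lintegral_const_mul _ hmeas_min
      _ = ENNReal.ofReal (M ^ 4 / α ^ 4) * ∫⁻ t, (∫⁻ s, g t s ∂ν) ∂μ := by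
          congr 1
          refine lintegral_congr_ae ?_
          filter_upwards [hae] with t ht
          exact hkey t ht.1
      _ = ENNReal.ofReal (M ^ 4 / α ^ 4) * ∫⁻ s, (∫⁻ t, g t s ∂μ) ∂ν := by rw [hswap]
      _ ≤ ENNReal.ofReal (M ^ 4 / α ^ 4) * ENNReal.ofReal (2 * α * I) :=
          mul_le_mul_right hbound _
      _ = ENNReal.ofReal (M ^ 4 / α ^ 4 * (2 * α * I)) := by
          rw [ENNReal.ofReal_mul (by positivity : (0:ℝ) ≤ M ^ 4 / α ^ 4)]
      _ = ENNReal.ofReal (2 * M ^ 4 * (1 / α ^ 3) * I) := by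
          congr 1
          field_simp
  -- convert interval integral
  have hIint : ∫ t in (0:ℝ)..α, Sig t = I := intervalIntegral.integral_of_le hα.le
  have hRHSnn : 0 ≤ 2 * M ^ 4 * (1 / α ^ 3) * I := by positivity
  rw [hIint]
  by_cases hint : Integrable (fun t => t ^ 2 * q t ^ 4) μ
  · rw [integral_eq_lintegral_of_nonneg_ae
      (Filter.Eventually.of_forall fun t => by positivity) hint.aestronglyMeasurable]
    exact ENNReal.toReal_le_of_le_ofReal hRHSnn hchain
  · rw [integral_undef hint]
    exact hRHSnn
end
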